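/- Let Ω be a finite nonempty type, let μ : Ω → ℝ be a strictly positive probability vector (μ(ω) > 0 for all ω and ∑_ω μ(ω) = 1), and let u denote the uniform probability vector u(ω) = 1/|Ω|. Then the worst-case value sup over probability vectors β : Ω → ℝ (β(ω) ≥ 0, ∑_ω β(ω) = 1) of L_μ(β) = ∑_ω β(ω)²/μ(ω) satisfies sup_β L_u(β) = |Ω| ≤ sup_β L_μ(β), with equality if and only if μ = u. In other words, the maximum entropy (uniform) distribution is the unique solution of the robust optimization problem argmin_μ max_β L_μ(β). -/

import Mathlib

open Finset

lemma sSup_L_eq {Ω : Type*} [Fintype Ω] [Nonempty Ω]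
    (μ : Ω → ℝ) (hμpos : ∀ ω, 0 < μ ω) :
    sSup {x : ℝ | ∃ β : Ω → ℝ, (∀ ω, 0 ≤ β ω) ∧ (∑ ω, β ω = 1) ∧
        x = ∑ ω, β ω ^ 2 / μ ω}
      = univ.sup' univ_nonempty (fun ω => (μ ω)⁻¹) := by
  classical
  set M := univ.sup' univ_nonempty (fun ω => (μ ω)⁻¹) with hM
  have hub : ∀ x ∈ {x : ℝ | ∃ β : Ω → ℝ, (∀ ω, 0 ≤ β ω) ∧ (∑ ω, β ω = 1) ∧
      x = ∑ ω, β ω ^ 2 / μ ω}, x ≤ M := by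
    rintro x ⟨β, hβ0, hβ1, rfl⟩
    calc ∑ ω, β ω ^ 2 / μ ω ≤ ∑ ω, β ω * M := by
          apply Finset.sum_le_sum
          intro ω _
          have hβle : β ω ≤ 1 := by
            rw [← hβ1]
            exact Finset.single_le_sum (fun i _ => hβ0 i) (mem_univ ω)
          have h1 : (μ ω)⁻¹ ≤ M := le_sup' (fun ω => (μ ω)⁻¹) (mem_univ ω)
          rw [div_eq_mul_inv, sq]
          calc β ω * β ω * (μ ω)⁻¹ ≤ β ω * 1 * (μ ω)⁻¹ :=
                mul_le_mul_of_nonneg_right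
                  (mul_le_mul_of_nonneg_left hβle (hβ0 ω))
                  (inv_pos.2 (hμpos ω)).le
            _ = β ω * (μ ω)⁻¹ := by ring
            _ ≤ β ω * M := mul_le_mul_of_nonneg_left h1 (hβ0 ω)
      _ = M := by rw [← Finset.sum_mul, hβ1, one_mul]
  obtain ⟨ω₀, -, hω₀⟩ := exists_mem_eq_sup' univ_nonempty (fun ω => (μ ω)⁻¹)
  have hmem : M ∈ {x : ℝ | ∃ β : Ω → ℝ, (∀ ω, 0 ≤ β ω) ∧ (∑ ω, β ω = 1) ∧
      x = ∑ ω, β ω ^ 2 / μ ω} := by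
    refine ⟨fun ω => if ω = ω₀ then 1 else 0, ?_, ?_, ?_⟩
    · intro ω; dsimp only; split <;> norm_num
    · simp
    · rw [Finset.sum_eq_single ω₀]
      · rw [hM, hω₀]
        norm_num [one_div]
      · intro b _ hb; simp [hb]
      · simp
  exact le_antisymm (csSup_le ⟨M, hmem⟩ hub) (le_csSup ⟨M, hub⟩ hmem)

/-- The maximum entropy (uniform) distribution is the unique solution of the
robust optimization problem `argmin_μ max_β L_μ(β)`, where
`L_μ(β) = ∑ ω, β ω ^ 2 / μ ω`. -/
theorem stmt_0 {Ω : Type*} [Fintype Ω] [Nonempty Ω]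
    (μ : Ω → ℝ) (hμpos : ∀ ω, 0 < μ ω) (hμsum : ∑ ω, μ ω = 1)
    (u : Ω → ℝ) (hu : ∀ ω, u ω = 1 / (Fintype.card Ω : ℝ)) :
    sSup {x : ℝ | ∃ β : Ω → ℝ, (∀ ω, 0 ≤ β ω) ∧ (∑ ω, β ω = 1) ∧
        x = ∑ ω, β ω ^ 2 / u ω} = (Fintype.card Ω : ℝ) ∧
    (Fintype.card Ω : ℝ) ≤
      sSup {x : ℝ | ∃ β : Ω → ℝ, (∀ ω, 0 ≤ β ω) ∧ (∑ ω, β ω = 1) ∧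
        x = ∑ ω, β ω ^ 2 / μ ω} ∧
    (sSup {x : ℝ | ∃ β : Ω → ℝ, (∀ ω, 0 ≤ β ω) ∧ (∑ ω, β ω = 1) ∧
        x = ∑ ω, β ω ^ 2 / μ ω} = (Fintype.card Ω : ℝ) ↔ μ = u) := by
  have hcard : (0 : ℝ) < (Fintype.card Ω : ℝ) := by
    exact_mod_cast Fintype.card_pos
  have hupos : ∀ ω, 0 < u ω := fun ω => by rw [hu]; positivity
  have h1 : sSup {x : ℝ | ∃ β : Ω → ℝ, (∀ ω, 0 ≤ β ω) ∧ (∑ ω, β ω = 1) ∧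
      x = ∑ ω, β ω ^ 2 / u ω} = (Fintype.card Ω : ℝ) := by
    rw [sSup_L_eq u hupos]
    have : (fun ω => (u ω)⁻¹) = fun _ : Ω => (Fintype.card Ω : ℝ) := by
      funext ω; rw [hu]; field_simp
    rw [this, Finset.sup'_const]
  have hμeq := sSup_L_eq μ hμpos
  obtain ⟨ω₀, -, hle⟩ : ∃ i ∈ univ, μ i ≤ 1 / (Fintype.card Ω : ℝ) := by
    apply Finset.exists_le_of_sum_le univ_nonempty
    rw [hμsum, Finset.sum_const, card_univ, nsmul_eq_mul]
    field_simp
    exact le_rfl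
  have hcard_le : (Fintype.card Ω : ℝ) ≤ univ.sup' univ_nonempty (fun ω => (μ ω)⁻¹) := by
    have h2 : (Fintype.card Ω : ℝ) ≤ (μ ω₀)⁻¹ := by
      rw [← one_div_one_div (Fintype.card Ω : ℝ), ← one_div]
      exact one_div_le_one_div_of_le (hμpos ω₀) hle
    exact h2.trans (le_sup' (fun ω => (μ ω)⁻¹) (mem_univ ω₀))
  refine ⟨h1, by rw [hμeq]; exact hcard_le, ?_⟩
  constructor
  · intro heq
    rw [hμeq] at heq
    have hge' : ∀ i, u i ≤ μ i := by
      intro i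
      have hωle : (μ i)⁻¹ ≤ (Fintype.card Ω : ℝ) := heq ▸ le_sup' (fun ω => (μ ω)⁻¹) (mem_univ i)
      have h3 : 1 / (Fintype.card Ω : ℝ) ≤ μ i := by
        rw [← one_div_one_div (μ i)]
        refine one_div_le_one_div_of_le (one_div_pos.2 (hμpos i)) ?_
        simpa [one_div] using hωle
      rw [hu]; exact h3
    funext ω
    have hsums : ∑ ω, u ω = ∑ ω, μ ω := by
      rw [hμsum]
      simp only [hu]
      rw [Finset.sum_const, card_univ, nsmul_eq_mul]
      field_simp
    have := (Finset.sum_eq_sum_iff_of_le (fun i _ => hge' i)).1 hsums ω (mem_univ ω)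
    exact this.symm
  · rintro rfl
    exact h1
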